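/- Let d₁,…,d_r be positive integers, r ≥ 1, and let a₁ ≤ a₂ ≤ ⋯ ≤ a_n and b₁,…,b_r be non-negative integers with b₁/d₁ ≤ ⋯ ≤ b_r/d_r. Let w₁ < w₂ < ⋯ < w_r ≤ n be indices satisfying w_{i+1} − w_i ≥ d_i² for 1 ≤ i ≤ r−1, w₁ ≥ 1, n ≥ w_r + d_r², and suppose d_i·a_{w_i} ≥ b_i for all i. Then with ε = 1/(r·max_i d_i), one has a₁ + ⋯ + a_n ≥ Σ_{i=1}^r (d_i + ε)·b_i. -/

import Mathlib

/-- The key inequality in the proof of the theorem on bottomless systems: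
under the stated orderings and spacings (all sequences 1-indexed),
`a₁ + ⋯ + a_n ≥ Σᵢ (dᵢ + ε)·bᵢ` with `ε = 1/(r·maxᵢ dᵢ)`. -/
theorem bottomless_key_inequality (r n : ℕ) (hr : 1 ≤ r)
    (d a b w : ℕ → ℕ)
    (hd : ∀ i, 1 ≤ i → i ≤ r → 0 < d i)
    (ha : ∀ i j, 1 ≤ i → i ≤ j → j ≤ n → a i ≤ a j)
    (hb : ∀ i, 1 ≤ i → i < r → (b i : ℚ) / (d i : ℚ) ≤ (b (i + 1) : ℚ) / (d (i + 1) : ℚ))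
    (hw1 : 1 ≤ w 1)
    (hwmono : ∀ i, 1 ≤ i → i < r → w i < w (i + 1))
    (hwspace : ∀ i, 1 ≤ i → i ≤ r - 1 → w i + d i ^ 2 ≤ w (i + 1))
    (hwn : w r + d r ^ 2 ≤ n)
    (hab : ∀ i, 1 ≤ i → i ≤ r → b i ≤ d i * a (w i)) :
    ∑ i ∈ Finset.Icc 1 r,
        ((d i : ℚ) + 1 / ((r : ℚ) * (((Finset.Icc 1 r).sup d : ℕ) : ℚ))) * (b i : ℚ)
      ≤ ∑ i ∈ Finset.Icc 1 n, (a i : ℚ) := by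
  -- basic monotonicity of w
  have hwlt : ∀ i j, 1 ≤ i → i < j → j ≤ r → w i < w j := by
    intro i j h1 hij hjr
    induction j with
    | zero => omega
    | succ k ih =>
      rcases Nat.lt_or_ge i k with h | h
      · exact lt_trans (ih (by omega) (by omega)) (hwmono k (by omega) (by omega))
      · have hik : i = k := by omega
        subst hik
        exact hwmono i h1 (by omega)
  have hspace : ∀ i j, 1 ≤ i → i < j → j ≤ r → w i + d i ^ 2 ≤ w j := by
    intro i j h1 hij hjr
    have h2 := hwspace i h1 (by omega)
    rcases Nat.eq_or_lt_of_le (Nat.succ_le_of_lt hij) with h | h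
    · rw [← h]; exact h2
    · exact le_trans h2 (le_of_lt (hwlt (i + 1) j (by omega) h hjr))
  have hwn' : ∀ i, 1 ≤ i → i ≤ r → w i + d i ^ 2 ≤ n := by
    intro i h1 hir
    rcases eq_or_lt_of_le hir with h | h
    · rw [h]; exact hwn
    · exact le_trans (hspace i r h1 h le_rfl)
        (le_trans (Nat.le_add_right _ _) hwn)
  have hwpos : ∀ i, 1 ≤ i → i ≤ r → 1 ≤ w i := by
    intro i h1 hir
    rcases eq_or_lt_of_le h1 with h | h
    · rw [← h]; exact hw1
    · exact le_trans hw1 (le_of_lt (hwlt 1 i le_rfl h hir))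
  have hwle : ∀ i, 1 ≤ i → i ≤ r → w i ≤ n := by
    intro i h1 hir
    exact le_trans (Nat.le_add_right _ _) (hwn' i h1 hir)
  -- the natural-number inequality: sum over blocks plus a n
  set B : ℕ → Finset ℕ := fun i => Finset.Icc (w i) (w i + d i ^ 2 - 1) with hB
  have hcard : ∀ i, 1 ≤ i → i ≤ r → (B i).card = d i ^ 2 := by
    intro i h1 hir
    have hdi := hd i h1 hir
    rw [hB]
    simp only [Nat.card_Icc]
    have : 1 ≤ d i ^ 2 := Nat.one_le_pow _ _ hdi
    omega
  have hdisj : (↑(Finset.Icc 1 r) : Set ℕ).PairwiseDisjoint B := by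
    intro i hi j hj hij
    simp only [Finset.coe_Icc, Set.mem_Icc] at hi hj
    rcases Nat.lt_or_ge i j with h | h
    · apply Finset.disjoint_left.mpr
      intro x hx hx'
      rw [hB] at hx hx'
      simp only [Finset.mem_Icc] at hx hx'
      have := hspace i j hi.1 h hj.2
      have hd1 : 1 ≤ d i ^ 2 := Nat.one_le_pow _ _ (hd i hi.1 hi.2)
      omega
    · have h' : j < i := by omega
      apply Finset.disjoint_left.mpr
      intro x hx hx'
      rw [hB] at hx hx'
      simp only [Finset.mem_Icc] at hx hx'
      have := hspace j i hj.1 h' hi.2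
      have hd1 : 1 ≤ d j ^ 2 := Nat.one_le_pow _ _ (hd j hj.1 hj.2)
      omega
  set T : Finset ℕ := (Finset.Icc 1 r).biUnion B with hT
  have hnT : n ∉ T := by
    intro h
    rw [hT] at h
    obtain ⟨i, hi, hn⟩ := Finset.mem_biUnion.mp h
    simp only [Finset.mem_Icc] at hi
    rw [hB] at hn
    simp only [Finset.mem_Icc] at hn
    have := hwn' i hi.1 hi.2
    have hd1 : 1 ≤ d i ^ 2 := Nat.one_le_pow _ _ (hd i hi.1 hi.2)
    omega
  have hsub : insert n T ⊆ Finset.Icc 1 n := by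
    intro x hx
    rcases Finset.mem_insert.mp hx with h | h
    · subst h
      simp only [Finset.mem_Icc]
      have h2 := hwn' r hr le_rfl
      have h1 := hwpos r hr le_rfl
      omega
    · rw [hT] at h
      simp only [Finset.mem_biUnion] at h
      obtain ⟨i, hi, hxB⟩ := h
      simp only [Finset.mem_Icc] at hi
      rw [hB] at hxB
      simp only [Finset.mem_Icc] at hxB
      have h1 := hwpos i hi.1 hi.2
      have h2 := hwn' i hi.1 hi.2
      have hd1 : 1 ≤ d i ^ 2 := Nat.one_le_pow _ _ (hd i hi.1 hi.2)
      simp only [Finset.mem_Icc]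
      omega
  have hblock : ∀ i, 1 ≤ i → i ≤ r → d i ^ 2 * a (w i) ≤ ∑ j ∈ B i, a j := by
    intro i h1 hir
    calc d i ^ 2 * a (w i) = (B i).card * a (w i) := by rw [hcard i h1 hir]
    _ = ∑ _j ∈ B i, a (w i) := by rw [Finset.sum_const, smul_eq_mul]
    _ ≤ ∑ j ∈ B i, a j := by
        apply Finset.sum_le_sum
        intro j hj
        rw [hB] at hj
        simp only [Finset.mem_Icc] at hj
        have h2 := hwn' i h1 hir
        have hd1 : 1 ≤ d i ^ 2 := Nat.one_le_pow _ _ (hd i h1 hir)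
        exact ha (w i) j (hwpos i h1 hir) hj.1 (by omega)
  have hA : (∑ i ∈ Finset.Icc 1 r, d i ^ 2 * a (w i)) + a n ≤ ∑ j ∈ Finset.Icc 1 n, a j := by
    calc (∑ i ∈ Finset.Icc 1 r, d i ^ 2 * a (w i)) + a n
        ≤ (∑ i ∈ Finset.Icc 1 r, ∑ j ∈ B i, a j) + a n := by
          gcongr with i hi
          simp only [Finset.mem_Icc] at hi
          exact hblock i hi.1 hi.2
      _ = (∑ j ∈ T, a j) + a n := by rw [hT, Finset.sum_biUnion hdisj]
      _ = ∑ j ∈ insert n T, a j := by rw [Finset.sum_insert hnT]; ring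
      _ ≤ ∑ j ∈ Finset.Icc 1 n, a j := Finset.sum_le_sum_of_subset hsub
  -- rational side
  set D : ℕ := (Finset.Icc 1 r).sup d with hDdef
  have hrmem : r ∈ Finset.Icc 1 r := by simp [hr]
  have hDpos : 0 < D := lt_of_lt_of_le (hd r hr le_rfl) (Finset.le_sup hrmem)
  have hrQ : (0 : ℚ) < (r : ℚ) := by exact_mod_cast hr
  have hDQ : (0 : ℚ) < (D : ℚ) := by exact_mod_cast hDpos
  have hterm : ∀ i ∈ Finset.Icc 1 r,
      ((d i : ℚ) + 1 / ((r : ℚ) * (D : ℚ))) * (b i : ℚ)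
        ≤ (d i : ℚ) ^ 2 * (a (w i) : ℚ) + (1 / (r : ℚ)) * (a n : ℚ) := by
    intro i hi
    simp only [Finset.mem_Icc] at hi
    have habQ : (b i : ℚ) ≤ (d i : ℚ) * (a (w i) : ℚ) := by
      exact_mod_cast hab i hi.1 hi.2
    have hdD : (d i : ℚ) ≤ (D : ℚ) := by
      exact_mod_cast Finset.le_sup (f := d) (Finset.mem_Icc.mpr hi)
    have haw : (a (w i) : ℚ) ≤ (a n : ℚ) := by
      exact_mod_cast ha (w i) n (hwpos i hi.1 hi.2) (hwle i hi.1 hi.2) le_rfl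
    have hawpos : (0 : ℚ) ≤ (a (w i) : ℚ) := by positivity
    have hbpos : (0 : ℚ) ≤ (b i : ℚ) := by positivity
    have hdpos : (0 : ℚ) < (d i : ℚ) := by exact_mod_cast hd i hi.1 hi.2
    have h1 : (d i : ℚ) * (b i : ℚ) ≤ (d i : ℚ) ^ 2 * (a (w i) : ℚ) := by
      nlinarith
    have h2 : (1 / ((r : ℚ) * (D : ℚ))) * (b i : ℚ) ≤ (1 / (r : ℚ)) * (a n : ℚ) := by
      rw [div_mul_eq_mul_div, div_mul_eq_mul_div, div_le_div_iff₀ (by positivity) hrQ]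
      have : (b i : ℚ) ≤ (D : ℚ) * (a n : ℚ) :=
        le_trans habQ (by nlinarith)
      nlinarith
    nlinarith [h1, h2]
  calc ∑ i ∈ Finset.Icc 1 r, ((d i : ℚ) + 1 / ((r : ℚ) * (D : ℚ))) * (b i : ℚ)
      ≤ ∑ i ∈ Finset.Icc 1 r, ((d i : ℚ) ^ 2 * (a (w i) : ℚ) + (1 / (r : ℚ)) * (a n : ℚ)) :=
        Finset.sum_le_sum hterm
    _ = (∑ i ∈ Finset.Icc 1 r, (d i : ℚ) ^ 2 * (a (w i) : ℚ)) + (a n : ℚ) := by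
        rw [Finset.sum_add_distrib, Finset.sum_const, Nat.card_Icc]
        have : (r + 1 - 1 : ℕ) = r := by omega
        rw [this]
        rw [nsmul_eq_mul]
        field_simp
    _ ≤ ∑ i ∈ Finset.Icc 1 n, (a i : ℚ) := by
        have := hA
        have hcast : ((∑ i ∈ Finset.Icc 1 r, d i ^ 2 * a (w i)) + a n : ℚ)
            ≤ ((∑ j ∈ Finset.Icc 1 n, a j : ℕ) : ℚ) := by exact_mod_cast this
        push_cast at hcast
        convert hcast using 2
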